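/- Let C_n be the empirical distribution function of n distinct points in [0,1] and C_n^← its quantile function. Then ‖C_n^← − id‖_∞ = ‖C_n − id‖_∞, where id is the identity on [0,1] and ‖·‖_∞ is the supremum norm on [0,1]. -/

import Mathlib

open Set

/-- Empirical distribution function of the points `u 1, …, u n`. -/
noncomputable def empCdf (n : ℕ) (u : Fin n → ℝ) (v : ℝ) : ℝ :=
  (1 / n : ℝ) * (Finset.univ.filter (fun k => u k ≤ v)).card

/-- Quantile function of the empirical distribution, as a map `[0,1] → [0,1]`. -/
noncomputable def empQuantile (n : ℕ) (u : Fin n → ℝ) (y : ℝ) : ℝ :=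
  sInf {v ∈ Set.Icc (0:ℝ) 1 | y ≤ empCdf n u v}

section helpers

variable {n : ℕ} {u : Fin n → ℝ}

lemma empCdf_mono : Monotone (empCdf n u) := by
  intro a b hab
  unfold empCdf
  have h : (Finset.univ.filter (fun k => u k ≤ a)) ⊆ (Finset.univ.filter (fun k => u k ≤ b)) :=
    fun k hk => by simp only [Finset.mem_filter] at hk ⊢; exact ⟨hk.1, hk.2.trans hab⟩
  have := Finset.card_le_card h
  have h2 : ((Finset.univ.filter (fun k => u k ≤ a)).card : ℝ)
      ≤ ((Finset.univ.filter (fun k => u k ≤ b)).card : ℝ) := by exact_mod_cast this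
  have h3 : (0:ℝ) ≤ 1 / n := by positivity
  exact mul_le_mul_of_nonneg_left h2 h3

lemma empCdf_nonneg (v : ℝ) : 0 ≤ empCdf n u v := by
  unfold empCdf; positivity

lemma empCdf_le_one (hn : 0 < n) (v : ℝ) : empCdf n u v ≤ 1 := by
  unfold empCdf
  have h : ((Finset.univ.filter (fun k => u k ≤ v)).card : ℝ) ≤ n := by
    exact_mod_cast (Finset.card_le_card (Finset.filter_subset _ _)).trans_eq (Finset.card_univ.trans (Fintype.card_fin n))
  have hn' : (0:ℝ) < n := by exact_mod_cast hn
  calc (1 / n : ℝ) * _ ≤ (1 / n : ℝ) * n := mul_le_mul_of_nonneg_left h (by positivity)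
    _ = 1 := by field_simp

lemma empCdf_zero (hmem : ∀ k, u k ∈ Set.Ioo (0:ℝ) 1) : empCdf n u 0 = 0 := by
  unfold empCdf
  have : (Finset.univ.filter (fun k => u k ≤ (0:ℝ))) = ∅ := by
    apply Finset.filter_false_of_mem
    intro k _
    exact not_le.mpr (hmem k).1
  simp [this]

lemma empCdf_one (hn : 0 < n) (hmem : ∀ k, u k ∈ Set.Ioo (0:ℝ) 1) : empCdf n u 1 = 1 := by
  unfold empCdf
  have : (Finset.univ.filter (fun k => u k ≤ (1:ℝ))) = Finset.univ := by
    apply Finset.filter_true_of_mem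
    intro k _
    exact le_of_lt (hmem k).2
  rw [this]
  have hn' : (n:ℝ) ≠ 0 := by positivity
  simp [Finset.card_univ]
  field_simp

lemma empS_bddBelow (t : ℝ) : BddBelow {v ∈ Set.Icc (0:ℝ) 1 | t ≤ empCdf n u v} :=
  ⟨0, fun v hv => hv.1.1⟩

lemma empS_nonempty (hn : 0 < n) (hmem : ∀ k, u k ∈ Set.Ioo (0:ℝ) 1) {t : ℝ} (ht : t ≤ 1) :
    Set.Nonempty {v ∈ Set.Icc (0:ℝ) 1 | t ≤ empCdf n u v} :=
  ⟨1, ⟨by norm_num, by rw [empCdf_one hn hmem]; exact ht⟩⟩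

lemma empQuantile_mem (hn : 0 < n) (hmem : ∀ k, u k ∈ Set.Ioo (0:ℝ) 1) {t : ℝ}
    (ht : t ∈ Set.Icc (0:ℝ) 1) :
    empQuantile n u t ∈ Set.Icc (0:ℝ) 1 ∧ t ≤ empCdf n u (empQuantile n u t) := by
  set S := {v ∈ Set.Icc (0:ℝ) 1 | t ≤ empCdf n u v} with hS
  have hne := empS_nonempty hn hmem ht.2
  have hbdd := empS_bddBelow (n := n) (u := u) t
  have hq0 : 0 ≤ sInf S := le_csInf hne (fun w hw => hw.1.1)
  have hq1 : sInf S ≤ 1 := csInf_le hbdd (⟨by norm_num, by rw [empCdf_one hn hmem]; exact ht.2⟩)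
  refine ⟨⟨hq0, hq1⟩, ?_⟩
  set q := sInf S with hqdef
  by_contra hlt
  push_neg at hlt
  -- find ε > 0 such that any w < q + ε has C w ≤ C q
  have key : ∃ ε > (0:ℝ), ∀ w, w < q + ε →
      (Finset.univ.filter (fun k => u k ≤ w)) ⊆ (Finset.univ.filter (fun k => u k ≤ q)) := by
    set T := Finset.univ.filter (fun k => q < u k) with hT
    by_cases hTne : T.Nonempty
    · refine ⟨T.inf' hTne (fun k => u k - q), ?_, ?_⟩
      · apply (Finset.lt_inf'_iff _).mpr
        intro k hk
        have := (Finset.mem_filter.mp hk).2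
        linarith
      · intro w hw
        intro k hk
        simp only [Finset.mem_filter, Finset.mem_univ, true_and] at hk ⊢
        by_contra hqk
        push_neg at hqk
        have hkT : k ∈ T := Finset.mem_filter.mpr ⟨Finset.mem_univ _, hqk⟩
        have : T.inf' hTne (fun k => u k - q) ≤ u k - q := Finset.inf'_le _ hkT
        linarith
    · refine ⟨1, one_pos, fun w _ k hk => ?_⟩
      simp only [Finset.mem_filter, Finset.mem_univ, true_and] at hk ⊢
      by_contra hqk
      push_neg at hqk
      exact hTne ⟨k, Finset.mem_filter.mpr ⟨Finset.mem_univ _, hqk⟩⟩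
  obtain ⟨ε, hε, hsub⟩ := key
  obtain ⟨w, hwS, hwlt⟩ := (csInf_lt_iff hbdd hne).mp (by linarith : sInf S < q + ε)
  have hCw : empCdf n u w ≤ empCdf n u q := by
    unfold empCdf
    have := Finset.card_le_card (hsub w hwlt)
    have h2 : ((Finset.univ.filter (fun k => u k ≤ w)).card : ℝ)
        ≤ ((Finset.univ.filter (fun k => u k ≤ q)).card : ℝ) := by exact_mod_cast this
    exact mul_le_mul_of_nonneg_left h2 (by positivity)
  have h3 := hwS.2
  have hqe : empQuantile n u t = q := rfl
  rw [hqe] at hlt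
  linarith

lemma empCdf_lt_of_lt_quantile {t v : ℝ} (hv : v ∈ Set.Icc (0:ℝ) 1)
    (hlt : v < empQuantile n u t) : empCdf n u v < t := by
  by_contra h
  push_neg at h
  have : empQuantile n u t ≤ v := csInf_le (empS_bddBelow t) ⟨hv, h⟩
  linarith

lemma empQuantile_le {t v : ℝ} (hv : v ∈ Set.Icc (0:ℝ) 1) (h : t ≤ empCdf n u v) :
    empQuantile n u t ≤ v := csInf_le (empS_bddBelow t) ⟨hv, h⟩

lemma le_empQuantile (hn : 0 < n) (hmem : ∀ k, u k ∈ Set.Ioo (0:ℝ) 1) {t v : ℝ}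
    (ht : t ≤ 1) (h : empCdf n u v < t) : v ≤ empQuantile n u t := by
  apply le_csInf (empS_nonempty hn hmem ht)
  intro w hw
  by_contra hwv
  push_neg at hwv
  have : empCdf n u w ≤ empCdf n u v := empCdf_mono (le_of_lt hwv)
  have := hw.2
  linarith

end helpers

/-- `‖C_n^← − id‖_∞ = ‖C_n − id‖_∞` on `[0,1]` for the empirical distribution of
`n` distinct points of `(0,1)`. -/
theorem stmt14 (n : ℕ) (hn : 0 < n) (u : Fin n → ℝ)
    (hinj : Function.Injective u) (hmem : ∀ k, u k ∈ Set.Ioo (0:ℝ) 1) :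
    (⨆ t : Set.Icc (0:ℝ) 1, |empQuantile n u t - (t : ℝ)|)
      = ⨆ t : Set.Icc (0:ℝ) 1, |empCdf n u t - (t : ℝ)| := by
  have hne : Nonempty (Set.Icc (0:ℝ) 1) := ⟨⟨0, by norm_num⟩⟩
  have hQmem : ∀ t : Set.Icc (0:ℝ) 1, empQuantile n u t ∈ Set.Icc (0:ℝ) 1 :=
    fun t => (empQuantile_mem hn hmem t.2).1
  have hbddQ : BddAbove (Set.range fun t : Set.Icc (0:ℝ) 1 => |empQuantile n u t - (t : ℝ)|) := by
    refine ⟨1, ?_⟩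
    rintro x ⟨t, rfl⟩
    have h1 := (hQmem t).1; have h2 := (hQmem t).2
    have := t.2.1; have := t.2.2
    rw [abs_le]; constructor <;> linarith
  have hbddC : BddAbove (Set.range fun t : Set.Icc (0:ℝ) 1 => |empCdf n u t - (t : ℝ)|) := by
    refine ⟨1, ?_⟩
    rintro x ⟨t, rfl⟩
    have h1 := empCdf_nonneg (u := u) (t : ℝ); have h2 := empCdf_le_one (u := u) hn (t : ℝ)
    have := t.2.1; have := t.2.2
    rw [abs_le]; constructor <;> linarith
  set A := ⨆ t : Set.Icc (0:ℝ) 1, |empCdf n u t - (t : ℝ)| with hAdef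
  set B := ⨆ t : Set.Icc (0:ℝ) 1, |empQuantile n u t - (t : ℝ)| with hBdef
  have hA : ∀ v, (hv : v ∈ Set.Icc (0:ℝ) 1) → |empCdf n u v - v| ≤ A :=
    fun v hv => le_ciSup hbddC ⟨v, hv⟩
  have hB : ∀ t, (ht : t ∈ Set.Icc (0:ℝ) 1) → |empQuantile n u t - t| ≤ B :=
    fun t ht => le_ciSup hbddQ ⟨t, ht⟩
  have hA0 : 0 ≤ A := le_trans (abs_nonneg _) (hA 0 (by norm_num))
  have hB0 : 0 ≤ B := le_trans (abs_nonneg _) (hB 0 (by norm_num))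
  apply le_antisymm
  · -- B ≤ A
    apply ciSup_le
    rintro ⟨t, ht⟩
    set q := empQuantile n u t with hqdef
    obtain ⟨hq, hCq⟩ := empQuantile_mem hn hmem ht
    rw [abs_sub_le_iff]
    constructor
    · -- q - t ≤ A
      rcases le_or_gt q t with hle | hgt
      · linarith
      · apply le_of_forall_pos_le_add
        intro ε hε
        have hqpos : 0 < q := lt_of_le_of_lt ht.1 hgt
        set v := max 0 (q - ε) with hvdef
        have hv0 : 0 ≤ v := le_max_left _ _
        have hv1 : v ≤ 1 := max_le (by norm_num) (by linarith [hq.2])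
        have hvq : v < q := max_lt hqpos (by linarith)
        have hCv : empCdf n u v < t := empCdf_lt_of_lt_quantile ⟨hv0, hv1⟩ hvq
        have hAv := hA v ⟨hv0, hv1⟩
        have h1 : v - empCdf n u v ≤ |empCdf n u v - v| := by
          rw [abs_sub_comm]; exact le_abs_self _
        have h2 : q - ε ≤ v := le_max_right _ _
        linarith
    · -- t - q ≤ A
      have := hA q hq
      have h1 : empCdf n u q - q ≤ |empCdf n u q - q| := le_abs_self _
      linarith
  · -- A ≤ B
    apply ciSup_le
    rintro ⟨v, hv⟩
    set c := empCdf n u v with hcdef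
    have hc : c ∈ Set.Icc (0:ℝ) 1 := ⟨empCdf_nonneg v, empCdf_le_one hn v⟩
    rw [abs_sub_le_iff]
    constructor
    · -- c - v ≤ B
      have hQc : empQuantile n u c ≤ v := empQuantile_le hv (le_refl c)
      have := hB c hc
      have h1 : c - empQuantile n u c ≤ |empQuantile n u c - c| := by
        rw [abs_sub_comm]; exact le_abs_self _
      linarith
    · -- v - c ≤ B
      rcases le_or_gt v c with hle | hgt
      · linarith
      · apply le_of_forall_pos_le_add
        intro ε hε
        have hc1 : c < 1 := lt_of_lt_of_le hgt hv.2
        set t := min 1 (c + ε) with htdef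
        have ht0 : 0 ≤ t := le_min (by norm_num) (by linarith [hc.1])
        have ht1 : t ≤ 1 := min_le_left _ _
        have hct : c < t := lt_min hc1 (by linarith)
        have hvQ : v ≤ empQuantile n u t := le_empQuantile hn hmem ht1 hct
        have := hB t ⟨ht0, ht1⟩
        have h1 : empQuantile n u t - t ≤ |empQuantile n u t - t| := le_abs_self _
        have h2 : t ≤ c + ε := min_le_right _ _
        linarith
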